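/- Let r₁, r₂, r₃, k₁, k₂, k₃, m₂₁, m₂₃ > 0 with r₁ > m₂₁ and r₃ > m₂₃, and let (P₁*, P₂*, P₃*) be the coexistence equilibrium of model (n2). Then the Jacobian of the system at this equilibrium, which is lower/upper triangular with diagonal entries J₁₁ = −(r₁/k₁)P₁*, J₂₂ = −(r₂/k₂)P₂* − (m₂₁/P₂*)P₁* − (m₂₃/P₂*)P₃*, J₃₃ = −(r₃/k₃)P₃*, has all three eigenvalues strictly negative; hence the equilibrium is locally asymptotically stable whenever it is feasible. -/

import Mathlib

open Matrix in
/-- At the coexistence equilibrium of model (n2), the Jacobian is triangular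
with the stated strictly negative diagonal entries, so all three eigenvalues
are strictly negative: the equilibrium is locally asymptotically stable
whenever feasible. -/
theorem modeln2_coexistence_stable
    (r₁ r₂ r₃ k₁ k₂ k₃ m₂₁ m₂₃ : ℝ)
    (hr₁ : 0 < r₁) (hr₂ : 0 < r₂) (hr₃ : 0 < r₃)
    (hk₁ : 0 < k₁) (hk₂ : 0 < k₂) (hk₃ : 0 < k₃)
    (hm₂₁ : 0 < m₂₁) (hm₂₃ : 0 < m₂₃)
    (hf₁ : m₂₁ < r₁) (hf₃ : m₂₃ < r₃)
    (P₁ P₂ P₃ : ℝ)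
    (hP₁ : P₁ = (k₁ / r₁) * (r₁ - m₂₁))
    (hP₃ : P₃ = (k₃ / r₃) * (r₃ - m₂₃))
    (hP₂ : P₂ = (k₂ / (2 * r₂)) *
      (r₂ + Real.sqrt (r₂ ^ 2 + (4 / k₂) * r₂ * (m₂₁ * P₁ + m₂₃ * P₃))))
    (J : Matrix (Fin 3) (Fin 3) ℝ)
    (hJ : J = !![r₁ - 2 * r₁ * P₁ / k₁ - m₂₁, 0, 0;
                 m₂₁, r₂ - 2 * r₂ * P₂ / k₂, m₂₃;
                 0, 0, r₃ - 2 * r₃ * P₃ / k₃ - m₂₃]) :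
    J 0 0 = -(r₁ / k₁) * P₁ ∧
    J 1 1 = -(r₂ / k₂) * P₂ - (m₂₁ / P₂) * P₁ - (m₂₃ / P₂) * P₃ ∧
    J 2 2 = -(r₃ / k₃) * P₃ ∧
    J 0 0 < 0 ∧ J 1 1 < 0 ∧ J 2 2 < 0 ∧
    (∀ μ ∈ spectrum ℂ (J.map (Complex.ofReal)), μ.re < 0) := by
  have h1 : 0 < r₁ - m₂₁ := sub_pos.mpr hf₁
  have h3 : 0 < r₃ - m₂₃ := sub_pos.mpr hf₃
  have hP₁pos : 0 < P₁ := by rw [hP₁]; positivity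
  have hP₃pos : 0 < P₃ := by rw [hP₃]; positivity
  set S : ℝ := m₂₁ * P₁ + m₂₃ * P₃ with hS
  have hSpos : 0 < S := by positivity
  have harg : 0 < r₂ ^ 2 + (4 / k₂) * r₂ * S := by positivity
  set s : ℝ := Real.sqrt (r₂ ^ 2 + (4 / k₂) * r₂ * S) with hsdef
  have hs2 : s ^ 2 = r₂ ^ 2 + (4 / k₂) * r₂ * S := Real.sq_sqrt harg.le
  have hspos : 0 < s := Real.sqrt_pos.mpr harg
  have hP₂pos : 0 < P₂ := by rw [hP₂]; positivity
  -- equilibrium identity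
  have hs2' : k₂ * s ^ 2 = k₂ * r₂ ^ 2 + 4 * r₂ * S := by
    rw [hs2]; field_simp
  have hkey' : r₂ * P₂ ^ 2 - r₂ * P₂ * k₂ = k₂ * S := by
    rw [hP₂]
    field_simp
    linear_combination hs2'
  have hkey : r₂ * P₂ ^ 2 / k₂ - r₂ * P₂ = S := by
    field_simp
    linear_combination hkey'
  have hJ00 : J 0 0 = -(r₁ / k₁) * P₁ := by
    rw [hJ]; simp [hP₁]; field_simp; ring
  have hJ22 : J 2 2 = -(r₃ / k₃) * P₃ := by
    rw [hJ]; simp [hP₃]; field_simp; ring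
  have hJ11 : J 1 1 = -(r₂ / k₂) * P₂ - (m₂₁ / P₂) * P₁ - (m₂₃ / P₂) * P₃ := by
    rw [hJ]; simp only [Matrix.cons_val', Matrix.cons_val_one, Matrix.head_cons,
      Matrix.head_fin_const, Matrix.cons_val_fin_one, Matrix.cons_val_zero,
      Matrix.of_apply, Matrix.empty_val', Matrix.head_val']
    field_simp
    linear_combination -hkey' - k₂ * hS
  have hJ00neg : J 0 0 < 0 := by
    rw [hJ00]
    have : 0 < r₁ / k₁ * P₁ := by positivity
    linarith
  have hJ22neg : J 2 2 < 0 := by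
    rw [hJ22]
    have : 0 < r₃ / k₃ * P₃ := by positivity
    linarith
  have hJ11neg : J 1 1 < 0 := by
    rw [hJ11]
    have h1 : 0 < r₂ / k₂ * P₂ := by positivity
    have h2 : 0 < m₂₁ / P₂ * P₁ := by positivity
    have h3 : 0 < m₂₃ / P₂ * P₃ := by positivity
    linarith
  refine ⟨hJ00, hJ11, hJ22, hJ00neg, hJ11neg, hJ22neg, ?_⟩
  intro μ hμ
  rw [spectrum.mem_iff] at hμ
  have hdet : ((algebraMap ℂ (Matrix (Fin 3) (Fin 3) ℂ)) μ - J.map Complex.ofReal).det = 0 := by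
    by_contra h
    exact hμ ((Matrix.isUnit_iff_isUnit_det _).mpr (isUnit_iff_ne_zero.mpr h))
  have hfact : ((algebraMap ℂ (Matrix (Fin 3) (Fin 3) ℂ)) μ - J.map Complex.ofReal).det
      = (μ - (J 0 0 : ℂ)) * (μ - (J 1 1 : ℂ)) * (μ - (J 2 2 : ℂ)) := by
    have e : ∀ i j, ((algebraMap ℂ (Matrix (Fin 3) (Fin 3) ℂ)) μ - J.map Complex.ofReal) i j
        = (if i = j then μ else 0) - (J i j : ℂ) := by
      intro i j
      simp [Matrix.algebraMap_matrix_apply, Matrix.map_apply, Matrix.sub_apply]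
    rw [Matrix.det_fin_three]
    rw [e, e, e, e, e, e, e, e, e]
    have z01 : J 0 1 = 0 := by rw [hJ]; rfl
    have z02 : J 0 2 = 0 := by rw [hJ]; rfl
    have z20 : J 2 0 = 0 := by rw [hJ]; rfl
    have z21 : J 2 1 = 0 := by rw [hJ]; rfl
    rw [z01, z02, z20, z21]
    norm_num [Fin.ext_iff]
  rw [hfact] at hdet
  rcases mul_eq_zero.mp hdet with h | h
  · rcases mul_eq_zero.mp h with h | h
    · have : μ = (J 0 0 : ℂ) := sub_eq_zero.mp h
      rw [this]; simpa using hJ00neg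
    · have : μ = (J 1 1 : ℂ) := sub_eq_zero.mp h
      rw [this]; simpa using hJ11neg
  · have : μ = (J 2 2 : ℂ) := sub_eq_zero.mp h
    rw [this]; simpa using hJ22neg
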